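/- If Ω is a nonzero positive semidefinite stress matrix of framework (G,p), and (G,p') is any framework equivalent to (G,p) (with centroid at the origin), then Ω is also a stress matrix of (G,p'), i.e., ΩP' = 0 where P' is the configuration matrix of (G,p'). -/

import Mathlib

open Matrix BigOperators

/-- Expansion of the stress energy: if the rows of `Ω` sum to zero and `Ω` is
symmetric, then `∑ᵢⱼ Ωᵢⱼ ‖qᵢ - qⱼ‖² = -2 ∑ₜ qₜᵀ Ω qₜ`. -/
lemma stress_energy_expand {n k : ℕ} (Ω : Matrix (Fin n) (Fin n) ℝ)
    (hΩsym : Ω.IsSymm) (hΩe : Ω *ᵥ (fun _ => (1 : ℝ)) = 0)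
    (Q : Matrix (Fin n) (Fin k) ℝ) :
    ∑ i, ∑ j, Ω i j * ∑ t, (Q i t - Q j t) ^ 2
      = -2 * ∑ t, ∑ i, ∑ j, Q i t * Ω i j * Q j t := by
  have hrow : ∀ i, ∑ j, Ω i j = 0 := by
    intro i
    have := congrFun hΩe i
    simpa [Matrix.mulVec, dotProduct] using this
  have hcol : ∀ j, ∑ i, Ω i j = 0 := by
    intro j
    have : ∑ i, Ω i j = ∑ i, Ω j i := by
      refine Finset.sum_congr rfl fun i _ => ?_
      have := congrFun (congrFun hΩsym j) i
      simpa [Matrix.transpose_apply] using this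
    rw [this]; exact hrow j
  have expand : ∀ i j, Ω i j * ∑ t, (Q i t - Q j t) ^ 2
      = (∑ t, Q i t ^ 2) * Ω i j + (∑ t, Q j t ^ 2) * Ω i j
        - 2 * ∑ t, Q i t * Ω i j * Q j t := by
    intro i j
    simp only [Finset.mul_sum, Finset.sum_mul, ← Finset.sum_add_distrib,
      ← Finset.sum_sub_distrib]
    exact Finset.sum_congr rfl fun t _ => by ring
  calc ∑ i, ∑ j, Ω i j * ∑ t, (Q i t - Q j t) ^ 2
      = ∑ i, ∑ j, ((∑ t, Q i t ^ 2) * Ω i j + (∑ t, Q j t ^ 2) * Ω i j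
          - 2 * ∑ t, Q i t * Ω i j * Q j t) := by
        exact Finset.sum_congr rfl fun i _ => Finset.sum_congr rfl fun j _ => expand i j
    _ = (∑ i, (∑ t, Q i t ^ 2) * ∑ j, Ω i j)
          + (∑ j, (∑ t, Q j t ^ 2) * ∑ i, Ω i j)
          - 2 * ∑ i, ∑ j, ∑ t, Q i t * Ω i j * Q j t := by
        simp only [Finset.sum_add_distrib, Finset.sum_sub_distrib, ← Finset.mul_sum,
          Finset.mul_sum]
        rw [Finset.sum_comm (f := fun i j => (∑ t, Q j t ^ 2) * Ω i j)]
    _ = -2 * ∑ t, ∑ i, ∑ j, Q i t * Ω i j * Q j t := by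
        simp only [hrow, hcol, mul_zero, Finset.sum_const_zero, zero_add, zero_sub]
        have hc : ∑ t, ∑ i, ∑ j, Q i t * Ω i j * Q j t
            = ∑ i, ∑ j, ∑ t, Q i t * Ω i j * Q j t := by
          rw [Finset.sum_comm]
          exact Finset.sum_congr rfl fun i _ => Finset.sum_comm
        rw [hc]; ring

/-- If `Ω` is a nonzero PSD stress matrix of `(G,p)` and `(G,p')` is any framework
equivalent to `(G,p)` (with centroid at the origin), then `Ω P' = 0`, i.e. `Ω` is
also a stress matrix of `(G,p')`. -/
theorem stmt16 (n r s : ℕ) (G : SimpleGraph (Fin n))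
    (P : Matrix (Fin n) (Fin r) ℝ) (hPe : Pᵀ *ᵥ (fun _ => (1 : ℝ)) = 0)
    (Ω : Matrix (Fin n) (Fin n) ℝ)
    (hΩsym : Ω.IsSymm) (hΩP : Ω * P = 0) (hΩe : Ω *ᵥ (fun _ => (1 : ℝ)) = 0)
    (hΩmiss : ∀ i j, i ≠ j → ¬ G.Adj i j → Ω i j = 0)
    (hΩpsd : Ω.PosSemidef) (hΩne : Ω ≠ 0)
    (P' : Matrix (Fin n) (Fin s) ℝ) (hP'e : P'ᵀ *ᵥ (fun _ => (1 : ℝ)) = 0)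
    (hequiv : ∀ i j, G.Adj i j →
      ∑ t, (P' i t - P' j t) ^ 2 = ∑ t, (P i t - P j t) ^ 2) :
    Ω * P' = 0 := by
  -- The two stress energies agree
  have hE : ∑ i, ∑ j, Ω i j * ∑ t, (P' i t - P' j t) ^ 2
      = ∑ i, ∑ j, Ω i j * ∑ t, (P i t - P j t) ^ 2 := by
    refine Finset.sum_congr rfl fun i _ => Finset.sum_congr rfl fun j _ => ?_
    by_cases hij : i = j
    · subst hij; simp
    · by_cases hadj : G.Adj i j
      · rw [hequiv i j hadj]
      · rw [hΩmiss i j hij hadj]; ring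
  rw [stress_energy_expand Ω hΩsym hΩe P', stress_energy_expand Ω hΩsym hΩe P] at hE
  -- The quadratic form of Ω on columns of P vanishes since ΩP = 0
  have hPquad : ∑ t, ∑ i, ∑ j, P i t * Ω i j * P j t = 0 := by
    refine Finset.sum_eq_zero fun t _ => Finset.sum_eq_zero fun i _ => ?_
    have h0 : ∑ j, Ω i j * P j t = 0 := by
      have := congrFun (congrFun hΩP i) t
      simpa [Matrix.mul_apply] using this
    calc ∑ j, P i t * Ω i j * P j t = P i t * ∑ j, Ω i j * P j t := by
          rw [Finset.mul_sum]; exact Finset.sum_congr rfl fun j _ => by ring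
      _ = 0 := by rw [h0, mul_zero]
  rw [hPquad, mul_zero] at hE
  have hsum0 : ∑ t, ∑ i, ∑ j, P' i t * Ω i j * P' j t = 0 := by linarith
  -- Each summand is a nonneg quadratic form value
  have hform : ∀ t, ∑ i, ∑ j, P' i t * Ω i j * P' j t
      = star (fun i => P' i t) ⬝ᵥ Ω *ᵥ (fun i => P' i t) := by
    intro t
    simp only [star_trivial, dotProduct, Matrix.mulVec, Finset.mul_sum]
    exact Finset.sum_congr rfl fun i _ => Finset.sum_congr rfl fun j _ => by ring
  have hnonneg : ∀ t ∈ Finset.univ, 0 ≤ ∑ i, ∑ j, P' i t * Ω i j * P' j t := by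
    intro t _
    rw [hform t]
    simpa using hΩpsd.dotProduct_mulVec_nonneg (fun i => P' i t)
  have heach : ∀ t ∈ Finset.univ, ∑ i, ∑ j, P' i t * Ω i j * P' j t = 0 :=
    (Finset.sum_eq_zero_iff_of_nonneg hnonneg).mp hsum0
  ext i t
  have hker : Ω *ᵥ (fun i => P' i t) = 0 := by
    rw [← hΩpsd.dotProduct_mulVec_zero_iff, ← hform t]
    exact heach t (Finset.mem_univ t)
  have := congrFun hker i
  simpa [Matrix.mul_apply, Matrix.mulVec, dotProduct] using this
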